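/- For an irreducible polynomial f over 𝔽₂ of degree m, there exists a generating vector g* ∈ G_m^s such that B_γ(g*, f) ≤ 2^{-m} · Σ_{∅ ≠ u ⊆ [s]} γ_u (m/2)^{|u|} ∏_{i∈u}(b_i - a_i). Moreover, for every c ≥ 1, the number of g ∈ G_m^s with B_γ(g, f) ≤ c · 2^{-m} Σ_{∅ ≠ u ⊆ [s]} γ_u (m/2)^{|u|} ∏_{i∈u}(b_i - a_i) exceeds 2^{sm}(1 - 1/c). -/

import Mathlib

open scoped Classical

/-- identification of a natural number with a polynomial over `𝔽₂` via its binary digits. -/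
noncomputable def natToPoly (n : ℕ) : Polynomial (ZMod 2) :=
  ∑ i ∈ Finset.range (Nat.size n), if Nat.testBit n i then Polynomial.X ^ i else 0

/-- `μ(k)`, the length of the binary expansion of `k`. -/
def mu (k : ℕ) : ℕ := Nat.size k

/-- the figure-of-merit `B_γ(g, f)`. -/
noncomputable def Bcrit (s m : ℕ) (γ : Finset (Fin s) → ℝ) (a b : Fin s → ℝ)
    (f : Polynomial (ZMod 2)) (g : Fin s → ℕ) : ℝ :=
  ∑ u ∈ Finset.univ.powerset.filter (fun u : Finset (Fin s) => u.Nonempty),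
    γ u * (∏ i ∈ u, (b i - a i)) *
      ∑ k ∈ u.pi fun _ => Finset.Icc 1 (2 ^ m - 1),
        if f ∣ ∑ i ∈ u.attach, natToPoly (g i.1) * natToPoly (k i.1 i.2) then
          (1 : ℝ) / 2 ^ (∑ i ∈ u.attach, mu (k i.1 i.2))
        else 0

lemma natToPoly_coeff (n j : ℕ) :
    (natToPoly n).coeff j = if Nat.testBit n j then 1 else 0 := by
  rw [natToPoly, Polynomial.finset_sum_coeff]
  by_cases hj : j < Nat.size n
  · rw [Finset.sum_eq_single j]
    · simp [Polynomial.coeff_X_pow, apply_ite (Polynomial.coeff · j)]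
    · intro i _ hij
      simp only [apply_ite (Polynomial.coeff · j), Polynomial.coeff_X_pow, Polynomial.coeff_zero]
      split
      · simp [Ne.symm hij]
      · rfl
    · simp [Finset.mem_range, hj]
  · have h0 : Nat.testBit n j = false := by
      apply Nat.testBit_eq_false_of_lt
      exact lt_of_lt_of_le (Nat.lt_size_self n) (Nat.pow_le_pow_right (by norm_num) (not_lt.mp hj))
    rw [h0, if_neg (by simp)]
    apply Finset.sum_eq_zero
    intro i hi
    have : i ≠ j := by rintro rfl; exact hj (Finset.mem_range.mp hi)
    simp only [apply_ite (Polynomial.coeff · j), Polynomial.coeff_X_pow, Polynomial.coeff_zero]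
    split
    · simp [Ne.symm this]
    · rfl

lemma natToPoly_injective : Function.Injective natToPoly := by
  intro n₁ n₂ h
  apply Nat.eq_of_testBit_eq
  intro i
  have := congrArg (Polynomial.coeff · i) h
  simp only [natToPoly_coeff] at this
  by_cases h1 : Nat.testBit n₁ i <;> by_cases h2 : Nat.testBit n₂ i <;>
    simp only [h1, h2, if_true, if_false] at this ⊢
  · exact absurd this one_ne_zero
  · exact absurd this.symm one_ne_zero

lemma natToPoly_zero : natToPoly 0 = 0 := by simp [natToPoly, Nat.size_zero]

lemma natToPoly_degree_lt {n m : ℕ} (hn : n < 2 ^ m) :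
    (natToPoly n).degree < (m : ℕ) := by
  apply lt_of_le_of_lt (Polynomial.degree_sum_le _ _)
  rw [Finset.sup_lt_iff (by exact_mod_cast WithBot.bot_lt_coe m)]
  intro i hi
  have him : i < m := lt_of_lt_of_le (Finset.mem_range.mp hi) (Nat.size_le.mpr hn)
  split
  · simpa [Polynomial.degree_X_pow] using (by exact_mod_cast him : (i : WithBot ℕ) < m)
  · exact lt_of_le_of_lt (by simp) (by exact_mod_cast WithBot.bot_lt_coe m)

section AR
variable {m : ℕ} {f : Polynomial (ZMod 2)} (hf : Irreducible f) (hdeg : f.natDegree = m)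
  (hm : 1 ≤ m)

include hf hdeg in
lemma f_deg_eq : f.degree = (m : ℕ) := by
  rw [Polynomial.degree_eq_natDegree hf.ne_zero, hdeg]

noncomputable def Efun (f : Polynomial (ZMod 2)) (n : ℕ) : AdjoinRoot f :=
  AdjoinRoot.mk f (natToPoly n)

include hf hdeg in
lemma Efun_inj : ∀ n₁ ∈ Finset.range (2 ^ m), ∀ n₂ ∈ Finset.range (2 ^ m),
    Efun f n₁ = Efun f n₂ → n₁ = n₂ := by
  intro n₁ h₁ n₂ h₂ h
  have hd : f ∣ natToPoly n₁ - natToPoly n₂ := by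
    rwa [← AdjoinRoot.mk_eq_zero, map_sub, sub_eq_zero]
  have : natToPoly n₁ - natToPoly n₂ = 0 := by
    apply Polynomial.eq_zero_of_dvd_of_degree_lt hd
    rw [f_deg_eq hf hdeg]
    exact lt_of_le_of_lt (Polynomial.degree_sub_le _ _)
      (max_lt (natToPoly_degree_lt (Finset.mem_range.mp h₁))
        (natToPoly_degree_lt (Finset.mem_range.mp h₂)))
  exact natToPoly_injective (sub_eq_zero.mp this)

include hf hdeg in
lemma ARcard [Fintype (AdjoinRoot f)] : Fintype.card (AdjoinRoot f) = 2 ^ m := by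
  rw [Module.card_fintype (AdjoinRoot.powerBasis hf.ne_zero).basis]
  simp [AdjoinRoot.powerBasis, ZMod.card, hdeg]

include hf hdeg in
lemma Efun_surj [Fintype (AdjoinRoot f)] :
    ∀ y : AdjoinRoot f, ∃ n ∈ Finset.range (2 ^ m), Efun f n = y := by
  have himg : (Finset.range (2 ^ m)).image (Efun f) = Finset.univ := by
    apply Finset.eq_univ_of_card
    rw [Finset.card_image_of_injOn (fun a ha b hb => Efun_inj hf hdeg a ha b hb),
      Finset.card_range, ARcard hf hdeg]
  intro y
  have : y ∈ (Finset.range (2 ^ m)).image (Efun f) := himg ▸ Finset.mem_univ y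
  obtain ⟨n, hn, hne⟩ := Finset.mem_image.mp this
  exact ⟨n, hn, hne⟩

include hf hdeg in
lemma Efun_ne_zero {k : ℕ} (hk : k ∈ Finset.Icc 1 (2 ^ m - 1)) : Efun f k ≠ 0 := by
  obtain ⟨hk1, hk2⟩ := Finset.mem_Icc.mp hk
  intro h
  have hd : f ∣ natToPoly k := by rwa [← AdjoinRoot.mk_eq_zero]
  have hklt : k < 2 ^ m :=
    lt_of_le_of_lt hk2 (Nat.sub_lt ((by positivity)) one_pos)
  have : natToPoly k = 0 := by
    apply Polynomial.eq_zero_of_dvd_of_degree_lt hd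
    rw [f_deg_eq hf hdeg]
    exact natToPoly_degree_lt hklt
  have := natToPoly_injective (this.trans natToPoly_zero.symm)
  omega

end AR

lemma count_ind_coord {F : Type*} [Fintype F] [DecidableEq F] (z : F) {s : ℕ} (i₀ : Fin s) :
    ∑ x : Fin s → F, (if x i₀ = z then (1 : ℝ) else 0) = (Fintype.card F : ℝ) ^ (s - 1) := by
  have key : ∀ x : Fin s → F,
      (if x i₀ = z then (1 : ℝ) else 0) = ∏ j, if j = i₀ then (if x j = z then (1:ℝ) else 0) else 1 := by
    intro x
    rw [Finset.prod_ite_eq' Finset.univ i₀ (fun j => if x j = z then (1:ℝ) else 0)]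
    simp
  simp_rw [key]
  rw [← Fintype.piFinset_univ,
    Finset.sum_prod_piFinset Finset.univ
      (fun (j : Fin s) (t : F) => if j = i₀ then (if t = z then (1:ℝ) else 0) else 1)]
  have : ∀ j : Fin s, (∑ t : F, if j = i₀ then (if t = z then (1:ℝ) else 0) else 1)
      = if j = i₀ then 1 else (Fintype.card F : ℝ) := by
    intro j
    by_cases h : j = i₀ <;> simp [h]
  simp_rw [this]
  rw [← Finset.mul_prod_erase Finset.univ _ (Finset.mem_univ i₀), if_pos rfl, one_mul]
  rw [Finset.prod_congr rfl (fun j hj => if_neg (Finset.ne_of_mem_erase hj)),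
    Finset.prod_const, Finset.card_erase_of_mem (Finset.mem_univ i₀), Finset.card_univ,
    Fintype.card_fin]

lemma count_lin {F : Type*} [Field F] [Fintype F] [DecidableEq F] {s : ℕ}
    (u : Finset (Fin s)) (hu : u.Nonempty) (c : Fin s → F) (hc : ∀ j ∈ u, c j ≠ 0) :
    ∑ x : Fin s → F, (if ∑ j ∈ u, x j * c j = 0 then (1 : ℝ) else 0)
      = (Fintype.card F : ℝ) ^ (s - 1) := by
  obtain ⟨i₀, hi₀⟩ := hu
  have hc₀ : c i₀ ≠ 0 := hc i₀ hi₀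
  set S : (Fin s → F) → F := fun x => ∑ j ∈ u.erase i₀, x j * c j with hS
  set e : (Fin s → F) → (Fin s → F) :=
    fun x => Function.update x i₀ ((x i₀ - S x) * (c i₀)⁻¹) with he
  set e' : (Fin s → F) → (Fin s → F) :=
    fun x => Function.update x i₀ (x i₀ * c i₀ + S x) with he'
  have hSupd : ∀ (x : Fin s → F) (t : F), S (Function.update x i₀ t) = S x := by
    intro x t
    apply Finset.sum_congr rfl
    intro j hj
    rw [Function.update_of_ne (Finset.ne_of_mem_erase hj)]
  have hee' : ∀ x, e' (e x) = x := by
    intro x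
    funext j
    by_cases hj : j = i₀
    · subst hj
      simp only [he, he', Function.update_self, hSupd]
      field_simp
      ring
    · simp only [he, he', Function.update_of_ne hj]
  have he'e : ∀ x, e (e' x) = x := by
    intro x
    funext j
    by_cases hj : j = i₀
    · subst hj
      simp only [he, he', Function.update_self, hSupd]
      field_simp
      ring
    · simp only [he, he', Function.update_of_ne hj]
  have hbij : Function.Bijective e := Function.bijective_iff_has_inverse.mpr ⟨e', hee', he'e⟩
  have hsum := Fintype.sum_bijective e hbij
    (fun x => if ∑ j ∈ u, (e x) j * c j = 0 then (1 : ℝ) else 0)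
    (fun x => if ∑ j ∈ u, x j * c j = 0 then (1 : ℝ) else 0) (fun x => rfl)
  rw [← hsum]
  have hcond : ∀ x : Fin s → F, (∑ j ∈ u, (e x) j * c j = 0) ↔ x i₀ = 0 := by
    intro x
    rw [← Finset.add_sum_erase _ _ hi₀]
    have h1 : ∑ j ∈ u.erase i₀, (e x) j * c j = S x := by
      apply Finset.sum_congr rfl
      intro j hj
      show Function.update x i₀ ((x i₀ - S x) * (c i₀)⁻¹) j * c j = x j * c j
      rw [Function.update_of_ne (Finset.ne_of_mem_erase hj)]
    have h2 : (e x) i₀ = (x i₀ - S x) * (c i₀)⁻¹ := by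
      show Function.update x i₀ ((x i₀ - S x) * (c i₀)⁻¹) i₀ = _
      rw [Function.update_self]
    rw [h1, h2]
    constructor
    · intro h
      have : (x i₀ - S x) * (c i₀)⁻¹ * c i₀ = -S x := by linear_combination h
      rw [inv_mul_cancel_right₀ hc₀] at this
      linear_combination this
    · intro h
      rw [h]
      field_simp
      ring
  rw [Finset.sum_congr rfl (fun x _ => if_congr (hcond x) rfl rfl)]
  exact count_ind_coord 0 i₀

lemma count_main {s m : ℕ} {f : Polynomial (ZMod 2)} (hf : Irreducible f)
    (hdeg : f.natDegree = m) (u : Finset (Fin s)) (hu : u.Nonempty)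
    (k : (i : Fin s) → i ∈ u → ℕ) (hk : ∀ (j : Fin s) (h : j ∈ u), k j h ∈ Finset.Icc 1 (2 ^ m - 1)) :
    ∑ g ∈ Fintype.piFinset (fun _ : Fin s => Finset.range (2 ^ m)),
      (if f ∣ ∑ i ∈ u.attach, natToPoly (g i.1) * natToPoly (k i.1 i.2) then (1 : ℝ) else 0)
      = (2 : ℝ) ^ (m * (s - 1)) := by
  haveI : Fact (Irreducible f) := ⟨hf⟩
  letI : Fintype (AdjoinRoot f) := Module.fintypeOfFintype (AdjoinRoot.powerBasis hf.ne_zero).basis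
  set c : Fin s → AdjoinRoot f := fun j => if h : j ∈ u then Efun f (k j h) else 1 with hc
  have hcne : ∀ j ∈ u, c j ≠ 0 := by
    intro j hj
    simp only [hc, dif_pos hj]
    exact Efun_ne_zero hf hdeg (hk j hj)
  have hcond : ∀ g : Fin s → ℕ,
      (f ∣ ∑ i ∈ u.attach, natToPoly (g i.1) * natToPoly (k i.1 i.2)) ↔
        (∑ j ∈ u, Efun f (g j) * c j = 0) := by
    intro g
    rw [← AdjoinRoot.mk_eq_zero, map_sum]
    have : ∀ i : {x // x ∈ u},
        AdjoinRoot.mk f (natToPoly (g i.1) * natToPoly (k i.1 i.2)) = Efun f (g i.1) * c i.1 := by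
      intro i
      rw [map_mul, hc]
      simp only [dif_pos i.2]
      rfl
    rw [Finset.sum_congr rfl (fun i _ => this i), Finset.sum_attach u (fun j => Efun f (g j) * c j)]
  rw [Finset.sum_congr rfl (fun g _ => if_congr (hcond g) rfl rfl)]
  have hbij := Finset.sum_bij
    (s := Fintype.piFinset (fun _ : Fin s => Finset.range (2 ^ m)))
    (t := (Finset.univ : Finset (Fin s → AdjoinRoot f)))
    (f := fun g : Fin s → ℕ => if ∑ j ∈ u, Efun f (g j) * c j = 0 then (1 : ℝ) else 0)
    (g := fun x : Fin s → AdjoinRoot f => if ∑ j ∈ u, x j * c j = 0 then (1 : ℝ) else 0)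
    (fun (g : Fin s → ℕ) _ => fun j => Efun f (g j))
    (fun _ _ => Finset.mem_univ _)
    (by
      intro g₁ hg₁ g₂ hg₂ h
      funext j
      exact Efun_inj hf hdeg (g₁ j) ((Fintype.mem_piFinset.mp hg₁) j)
        (g₂ j) ((Fintype.mem_piFinset.mp hg₂) j) (congrFun h j))
    (by
      intro x _
      choose n hn hEn using fun j => Efun_surj hf hdeg (x j)
      exact ⟨n, Fintype.mem_piFinset.mpr fun j => hn j, funext fun j => hEn j⟩)
    (fun g _ => rfl)
  rw [hbij, count_lin u hu c hcne, ARcard hf hdeg]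
  push_cast
  rw [← pow_mul]

lemma musum (m : ℕ) : ∑ k ∈ Finset.Icc 1 (2 ^ m - 1), (1 : ℝ) / 2 ^ (Nat.size k) = m / 2 := by
  induction m with
  | zero => simp
  | succ m ih =>
    have h1 : (1 : ℕ) ≤ 2 ^ m := Nat.one_le_two_pow
    have h2 : (2 : ℕ) ^ m ≤ 2 ^ (m + 1) := Nat.pow_le_pow_right (by norm_num) (Nat.le_succ m)
    have hicc : ∀ n : ℕ, Finset.Icc 1 (n - 1) = Finset.Ioc 0 (n - 1) := by
      intro n; rfl
    rw [hicc] at ih ⊢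
    rw [← Finset.sum_Ioc_consecutive _ (Nat.zero_le (2 ^ m - 1)) (by omega), ih]
    have hsz : ∀ k ∈ Finset.Ioc (2 ^ m - 1) (2 ^ (m + 1) - 1),
        (1 : ℝ) / 2 ^ (Nat.size k) = 1 / 2 ^ (m + 1) := by
      intro k hk
      obtain ⟨hk1, hk2⟩ := Finset.mem_Ioc.mp hk
      have h4 : (2:ℕ)^(m+1) = 2*2^m := by ring
      have hle : Nat.size k ≤ m + 1 := Nat.size_le.mpr (by omega)
      have hge : m < Nat.size k := Nat.lt_size.mpr (by omega)
      have : Nat.size k = m + 1 := by omega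
      rw [this]
    rw [Finset.sum_congr rfl hsz, Finset.sum_const, Nat.card_Ioc]
    have : (2 ^ (m + 1) - 1 - (2 ^ m - 1) : ℕ) = 2 ^ m := by
      have : (2 : ℕ) ^ (m + 1) = 2 ^ m * 2 := by ring
      omega
    rw [this]
    have h2m : (2 : ℝ) ^ (m+1) ≠ 0 := by positivity
    field_simp
    push_cast
    ring_nf
    rw [← mul_pow, inv_mul_cancel₀ (by norm_num : (2:ℝ) ≠ 0), one_pow]
    ring


theorem Bcrit_exists_good (s m : ℕ) (hs : 1 ≤ s) (hm : 1 ≤ m)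
    (γ : Finset (Fin s) → ℝ) (hγ : ∀ u, 0 < γ u) (a b : Fin s → ℝ) (hab : ∀ i, a i < b i)
    (f : Polynomial (ZMod 2)) (hf : Irreducible f) (hdeg : f.natDegree = m) :
    (∃ g ∈ Fintype.piFinset fun _ : Fin s => Finset.range (2 ^ m),
        Bcrit s m γ a b f g ≤
          (1 / 2 ^ m) *
            ∑ u ∈ Finset.univ.powerset.filter (fun u : Finset (Fin s) => u.Nonempty),
              γ u * ((m : ℝ) / 2) ^ u.card * ∏ i ∈ u, (b i - a i)) ∧
      ∀ c : ℝ, 1 ≤ c →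
        (2 : ℝ) ^ (s * m) * (1 - 1 / c) <
          (((Fintype.piFinset fun _ : Fin s => Finset.range (2 ^ m)).filter fun g =>
              Bcrit s m γ a b f g ≤
                c * ((1 / 2 ^ m) *
                  ∑ u ∈ Finset.univ.powerset.filter (fun u : Finset (Fin s) => u.Nonempty),
                    γ u * ((m : ℝ) / 2) ^ u.card * ∏ i ∈ u, (b i - a i))).card : ℝ) := by
  set U := Finset.univ.powerset.filter (fun u : Finset (Fin s) => u.Nonempty) with hU
  set GS := Fintype.piFinset fun _ : Fin s => Finset.range (2 ^ m) with hGS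
  set Ssum := ∑ u ∈ U, γ u * ((m : ℝ) / 2) ^ u.card * ∏ i ∈ u, (b i - a i) with hSsum
  set T := (1 / 2 ^ m : ℝ) * Ssum with hT
  -- basic positivity facts
  have hprodpos : ∀ u : Finset (Fin s), (0:ℝ) < ∏ i ∈ u, (b i - a i) :=
    fun u => Finset.prod_pos (fun i _ => sub_pos.mpr (hab i))
  have hSpos : 0 < Ssum := by
    apply Finset.sum_pos
    · intro u hu
      have : (0:ℝ) < ((m:ℝ)/2)^u.card := by positivity
      exact mul_pos (mul_pos (hγ u) this) (hprodpos u)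
    · refine ⟨Finset.univ, ?_⟩
      rw [hU, Finset.mem_filter]
      haveI : Nonempty (Fin s) := ⟨⟨0, hs⟩⟩
      exact ⟨Finset.mem_powerset_self _, Finset.univ_nonempty⟩
  have hTpos : 0 < T := by
    rw [hT]
    positivity
  have hBnn : ∀ g : Fin s → ℕ, 0 ≤ Bcrit s m γ a b f g := by
    intro g
    apply Finset.sum_nonneg
    intro u hu
    apply mul_nonneg (mul_nonneg (hγ u).le (hprodpos u).le)
    apply Finset.sum_nonneg
    intro k hk
    split
    · positivity
    · exact le_refl 0
  have hGScard : (GS.card : ℝ) = 2 ^ (s * m) := by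
    rw [hGS, Fintype.card_piFinset]
    push_cast
    simp [Finset.card_range, ← pow_mul, mul_comm m s]
  -- main average computation
  have claimA : ∑ g ∈ GS, Bcrit s m γ a b f g = (2:ℝ) ^ (m * (s-1)) * Ssum := by
    unfold Bcrit
    rw [Finset.sum_comm, hSsum, Finset.mul_sum]
    apply Finset.sum_congr rfl
    intro u hu
    have hune : u.Nonempty := (Finset.mem_filter.mp hu).2
    rw [← Finset.mul_sum, Finset.sum_comm]
    have step1 : ∀ k ∈ u.pi fun _ => Finset.Icc 1 (2 ^ m - 1),
        (∑ g ∈ GS, if f ∣ ∑ i ∈ u.attach, natToPoly (g i.1) * natToPoly (k i.1 i.2) then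
            (1 : ℝ) / 2 ^ (∑ i ∈ u.attach, mu (k i.1 i.2)) else 0)
          = ((1 : ℝ) / 2 ^ (∑ i ∈ u.attach, mu (k i.1 i.2))) * 2 ^ (m * (s-1)) := by
      intro k hk
      have hsplit : ∀ g : Fin s → ℕ,
          (if f ∣ ∑ i ∈ u.attach, natToPoly (g i.1) * natToPoly (k i.1 i.2) then
            (1 : ℝ) / 2 ^ (∑ i ∈ u.attach, mu (k i.1 i.2)) else 0)
          = ((1 : ℝ) / 2 ^ (∑ i ∈ u.attach, mu (k i.1 i.2))) *
            (if f ∣ ∑ i ∈ u.attach, natToPoly (g i.1) * natToPoly (k i.1 i.2) then (1:ℝ) else 0) := by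
        intro g; split <;> simp
      rw [Finset.sum_congr rfl (fun g _ => hsplit g), ← Finset.mul_sum,
        count_main hf hdeg u hune k (fun j h => Finset.mem_pi.mp hk j h)]
    rw [Finset.sum_congr rfl step1, ← Finset.sum_mul]
    have wprod : ∀ k ∈ u.pi fun _ => Finset.Icc 1 (2 ^ m - 1),
        ((1 : ℝ) / 2 ^ (∑ i ∈ u.attach, mu (k i.1 i.2)))
          = ∏ i ∈ u.attach, (1 : ℝ) / 2 ^ (mu (k i.1 i.2)) := by
      intro k _
      rw [Finset.prod_div_distrib, Finset.prod_const_one, Finset.prod_pow_eq_pow_sum]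
    rw [Finset.sum_congr rfl wprod, ← Finset.prod_sum u (fun _ => Finset.Icc 1 (2 ^ m - 1))
      (fun _ ki => (1:ℝ) / 2 ^ (mu ki))]
    have : ∀ i ∈ u, (∑ j ∈ Finset.Icc 1 (2 ^ m - 1), (1:ℝ) / 2 ^ (mu j)) = (m:ℝ)/2 := by
      intro i _
      simpa [mu] using musum m
    rw [Finset.prod_congr rfl this, Finset.prod_const]
    ring
  have hsummul : (2:ℝ) ^ (m * (s-1)) * Ssum = (GS.card : ℝ) * T := by
    rw [hGScard, hT]
    obtain ⟨n, rfl⟩ : ∃ n, s = n + 1 := ⟨s - 1, by omega⟩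
    have : (n + 1) * m = m * (n + 1 - 1) + m := by simp [Nat.add_sub_cancel]; ring
    rw [this, pow_add]
    field_simp
  constructor
  · -- existence
    have hne : GS.Nonempty := by
      rw [hGS, Fintype.piFinset_nonempty]
      intro j
      exact ⟨0, Finset.mem_range.mpr (by positivity)⟩
    apply Finset.exists_le_of_sum_le hne
    rw [claimA, hsummul, Finset.sum_const, nsmul_eq_mul]
  · -- Markov
    intro c hc
    have hcpos : (0:ℝ) < c := lt_of_lt_of_le one_pos hc
    set good := GS.filter (fun g => Bcrit s m γ a b f g ≤ c * T) with hgood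
    set bad := GS.filter (fun g => ¬ (Bcrit s m γ a b f g ≤ c * T)) with hbad
    have hcards : good.card + bad.card = GS.card := Finset.card_filter_add_card_filter_not _
    have hsumT : ∑ g ∈ GS, Bcrit s m γ a b f g = 2 ^ (s*m) * T := by
      rw [claimA, hsummul, hGScard]
    have hgoodcard : (good.card : ℝ) = 2 ^ (s*m) - bad.card := by
      have h : ((good.card : ℝ)) + bad.card = GS.card := by exact_mod_cast hcards
      rw [hGScard] at h
      linarith
    rcases bad.eq_empty_or_nonempty with hbe | hbne
    · have hb0 : (bad.card : ℝ) = 0 := by rw [hbe]; simp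
      rw [hgoodcard, hb0]
      have hpow : (0:ℝ) < 2 ^ (s*m) := by positivity
      have hinv : (0:ℝ) < 1 / c := by positivity
      nlinarith
    · have h1 : ∑ _g ∈ bad, (c * T) < ∑ g ∈ bad, Bcrit s m γ a b f g := by
        apply Finset.sum_lt_sum_of_nonempty hbne
        intro g hg
        exact not_le.mp (Finset.mem_filter.mp hg).2
      rw [Finset.sum_const, nsmul_eq_mul] at h1
      have h2 : ∑ g ∈ bad, Bcrit s m γ a b f g ≤ ∑ g ∈ GS, Bcrit s m γ a b f g :=
        Finset.sum_le_sum_of_subset_of_nonneg (Finset.filter_subset _ _) (fun g _ _ => hBnn g)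
      rw [hsumT] at h2
      have h3 : (bad.card : ℝ) * c * T < 2 ^ (s*m) * T := by
        calc (bad.card : ℝ) * c * T = bad.card * (c * T) := by ring
        _ < ∑ g ∈ bad, Bcrit s m γ a b f g := h1
        _ ≤ 2 ^ (s*m) * T := h2
      have h4 : (bad.card : ℝ) * c < 2 ^ (s*m) := lt_of_mul_lt_mul_right (by linarith [h3]) hTpos.le
      have h5 : (bad.card : ℝ) < 2 ^ (s*m) / c := by
        rw [lt_div_iff₀ hcpos]
        exact h4
      rw [hgoodcard]
      have h6 : (2:ℝ) ^ (s*m) * (1 - 1/c) = 2 ^ (s*m) - 2 ^ (s*m) / c := by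
        rw [mul_sub, mul_one, mul_one_div]
      rw [h6]
      linarith
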